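/- Simplicity criterion for holomorphic discs: let n ≥ 1 and let u : ℂ → ℂⁿ be continuous on the closed unit disc 𝔻 and holomorphic on the open unit disc. Suppose that the restriction of u to the unit circle is injective and that no point of the open unit disc is mapped by u into u(∂𝔻), i.e. u({|z| < 1}) ∩ u({|z| = 1}) = ∅. Then u is simple: there do not exist two disjoint nonempty relatively open subsets U, V of 𝔻 with u(U) = u(V). -/

import Mathlib

open Metric Filter Set
open scoped Topology

private lemma holo_pow_root {a : ℕ} (ha : a ≠ 0) {g : ℂ → ℂ} {z₀ : ℂ}
    (hg : AnalyticAt ℂ g z₀) (h0 : g z₀ ≠ 0) :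
    ∃ h : ℂ → ℂ, AnalyticAt ℂ h z₀ ∧ h z₀ ≠ 0 ∧ ∀ᶠ z in nhds z₀, (h z) ^ a = g z := by
  set c : ℂ := (g z₀) ^ ((a : ℂ)⁻¹) with hc_def
  have hc : c ^ a = g z₀ := Complex.cpow_nat_inv_pow _ ha
  have hcne : c ≠ 0 := by
    intro h
    rw [h, zero_pow ha] at hc
    exact h0 hc.symm
  set h : ℂ → ℂ := fun z => c * Complex.exp ((a : ℂ)⁻¹ * Complex.log (g z / g z₀)) with hh_def
  have hq : AnalyticAt ℂ (fun z => g z / g z₀) z₀ := hg.div analyticAt_const h0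
  have hq1 : (fun z => g z / g z₀) z₀ = 1 := by simp [div_self h0]
  have hlog : AnalyticAt ℂ (fun z => Complex.log (g z / g z₀)) z₀ := by
    exact hq.clog (by simp only [div_self h0]; exact Complex.one_mem_slitPlane)
  have hha : AnalyticAt ℂ h z₀ := by
    apply analyticAt_const.mul
    exact analyticAt_cexp.comp (analyticAt_const.mul hlog)
  refine ⟨h, hha, ?_, ?_⟩
  · simp only [hh_def]
    exact mul_ne_zero hcne (Complex.exp_ne_zero _)
  · have hne : ∀ᶠ z in nhds z₀, g z ≠ 0 := hg.continuousAt.eventually_ne h0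
    filter_upwards [hne] with z hz
    have : (Complex.exp ((a : ℂ)⁻¹ * Complex.log (g z / g z₀))) ^ a
        = g z / g z₀ := by
      rw [← Complex.exp_nat_mul]
      rw [← mul_assoc, mul_inv_cancel₀ (by exact_mod_cast ha : (a:ℂ) ≠ 0), one_mul]
      exact Complex.exp_log (div_ne_zero hz h0)
    simp only [hh_def, mul_pow, this, hc]
    field_simp

private lemma holo_normal_form {f : ℂ → ℂ} {z₀ : ℂ} {a : ℕ} (ha : a ≠ 0)
    (hf : AnalyticAt ℂ f z₀) (hord : analyticOrderAt f z₀ = a) :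
    ∃ φ : ℂ → ℂ, AnalyticAt ℂ φ z₀ ∧ φ z₀ = 0 ∧
      (∃ φ' : ℂ, HasDerivAt φ φ' z₀ ∧ φ' ≠ 0) ∧ ∀ᶠ z in nhds z₀, f z = (φ z) ^ a := by
  obtain ⟨g, hg, hg0, hfg⟩ := (hf.analyticOrderAt_eq_natCast (n := a)).1 hord
  obtain ⟨h, hh, hh0, hpow⟩ := holo_pow_root ha hg hg0
  refine ⟨fun z => (z - z₀) * h z, ?_, by simp, ⟨h z₀, ?_, hh0⟩, ?_⟩
  · exact ((analyticAt_id.sub analyticAt_const)).mul hh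
  · have h1 : HasDerivAt (fun z => z - z₀) 1 z₀ := (hasDerivAt_id z₀).sub_const z₀
    have h2 : HasDerivAt h (deriv h z₀) z₀ := hh.differentiableAt.hasDerivAt
    have : HasDerivAt (fun z => (z - z₀) * h z) _ z₀ := h1.mul h2
    simpa using this
  · filter_upwards [hfg, hpow] with z h1 h2
    rw [h1, mul_pow, h2]
    simp [smul_eq_mul]


/-- Local holomorphic inverse for a chart `φ` with `φ z₀ = 0`, `φ' z₀ ≠ 0`. -/
private lemma holo_local_chart {φ : ℂ → ℂ} {z₀ : ℂ} (hφ : AnalyticAt ℂ φ z₀)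
    (h0 : φ z₀ = 0) {φ' : ℂ} (hd : HasDerivAt φ φ' z₀) (hd' : φ' ≠ 0)
    {W : Set ℂ} (hW : W ∈ nhds z₀) :
    ∃ s > (0:ℝ), ∃ Φ : ℂ → ℂ, Φ 0 = z₀ ∧
      (∀ t ∈ ball (0:ℂ) s, DifferentiableAt ℂ Φ t) ∧
      (∀ t ∈ ball (0:ℂ) s, φ (Φ t) = t) ∧
      (∀ t ∈ ball (0:ℂ) s, Φ t ∈ W) ∧
      (∀ᶠ z in nhds z₀, Φ (φ z) = z) := by
  -- strict derivative
  obtain ⟨p, hp⟩ := id hφ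
  have hps : HasStrictDerivAt φ (p 1 fun _ => 1) z₀ := hp.hasStrictDerivAt
  have hpd : (p 1 fun _ => 1) = φ' := by
    have := hp.hasDerivAt
    exact this.unique hd
  rw [hpd] at hps
  set F := HasStrictFDerivAt.toOpenPartialHomeomorph φ (hps.hasStrictFDerivAt_equiv hd') with hF
  have hFcoe : (F : ℂ → ℂ) = φ :=
    HasStrictFDerivAt.toOpenPartialHomeomorph_coe _
  have hsrc : z₀ ∈ F.source := HasStrictFDerivAt.mem_toOpenPartialHomeomorph_source _
  have htgt : (0:ℂ) ∈ F.target := by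
    have := HasStrictFDerivAt.image_mem_toOpenPartialHomeomorph_target
      (hps.hasStrictFDerivAt_equiv hd')
    rwa [show φ z₀ = 0 from h0] at this
  -- Good neighbourhood of z₀ where φ is differentiable with nonzero deriv
  have hev : ∀ᶠ z in nhds z₀, AnalyticAt ℂ φ z := hφ.eventually_analyticAt
  have hderiv_an : AnalyticAt ℂ (deriv φ) z₀ := by
    obtain ⟨r, hr, hball⟩ := Metric.eventually_nhds_iff_ball.1 hev
    have : AnalyticOnNhd ℂ φ (ball z₀ r) := fun z hz => hball z hz
    exact this.deriv z₀ (mem_ball_self hr)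
  have hderiv0 : deriv φ z₀ = φ' := hd.deriv
  have hdnz : ∀ᶠ z in nhds z₀, deriv φ z ≠ 0 := by
    have : ContinuousAt (deriv φ) z₀ := hderiv_an.continuousAt
    rw [← hderiv0] at hd'
    exact this.eventually_ne hd'
  -- a good set
  have hgood : {z | AnalyticAt ℂ φ z ∧ deriv φ z ≠ 0} ∩ W ∩ F.source ∈ nhds z₀ := by
    refine inter_mem (inter_mem ?_ hW) (F.open_source.mem_nhds hsrc)
    exact hev.and hdnz
  have hsymm_cont : ContinuousAt F.symm 0 := F.continuousAt_symm htgt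
  have hsymm0 : F.symm 0 = z₀ := by
    have := F.left_inv hsrc
    rwa [hFcoe, h0] at this
  have hpre : F.symm ⁻¹' ({z | AnalyticAt ℂ φ z ∧ deriv φ z ≠ 0} ∩ W ∩ F.source) ∈ nhds (0:ℂ) := by
    exact hsymm_cont.preimage_mem_nhds (by rw [hsymm0]; exact hgood)
  have htarget_nhds : F.target ∈ nhds (0:ℂ) := F.open_target.mem_nhds htgt
  obtain ⟨s, hs, hball⟩ := Metric.mem_nhds_iff.1 (inter_mem hpre htarget_nhds)
  refine ⟨s, hs, F.symm, hsymm0, ?_, ?_, ?_, ?_⟩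
  · intro t ht
    obtain ⟨hpre', htgt'⟩ := hball ht
    obtain ⟨⟨han, hnz⟩, hWmem⟩ := hpre'.1, hpre'.2
    have hda : HasDerivAt φ (deriv φ (F.symm t)) (F.symm t) :=
      hpre'.1.1.1.differentiableAt.hasDerivAt
    have : HasDerivAt F.symm (deriv φ (F.symm t))⁻¹ t := by
      apply F.hasDerivAt_symm htgt' hpre'.1.1.2
      rwa [hFcoe]
    exact this.differentiableAt
  · intro t ht
    have := F.right_inv (hball ht).2
    rwa [hFcoe] at this
  · intro t ht
    exact (hball ht).1.1.2
  · filter_upwards [F.open_source.mem_nhds hsrc] with z hz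
    have := F.left_inv hz
    rwa [hFcoe] at this

variable {n : ℕ}

/-- A pair of nonconstant holomorphic germs along which `u` coincides. -/
def HasGermPair (u : ℂ → Fin n → ℂ) (z w : ℂ) : Prop :=
  ∃ r > (0:ℝ), ∃ α β : ℂ → ℂ,
    DifferentiableOn ℂ α (ball (0:ℂ) r) ∧ DifferentiableOn ℂ β (ball (0:ℂ) r) ∧
    α 0 = z ∧ β 0 = w ∧
    (∀ t ∈ ball (0:ℂ) r, α t ∈ ball (0:ℂ) 1 ∧ β t ∈ ball (0:ℂ) 1 ∧ u (α t) = u (β t)) ∧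
    (∃ t ∈ ball (0:ℂ) r, α t ≠ z)

private lemma lemmaB {u : ℂ → Fin n → ℂ}
    (hhol : DifferentiableOn ℂ u (ball (0:ℂ) 1))
    (hnc : ¬ ∃ C, ∀ z ∈ ball (0:ℂ) 1, u z = C)
    {zs ws : ℕ → ℂ} {z₀ w₀ : ℂ} (hz₀ : z₀ ∈ ball (0:ℂ) 1) (hw₀ : w₀ ∈ ball (0:ℂ) 1)
    (hzb : ∀ k, zs k ∈ ball (0:ℂ) 1) (hwb : ∀ k, ws k ∈ ball (0:ℂ) 1)
    (hueq : ∀ k, u (zs k) = u (ws k))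
    (hzne : ∀ k, zs k ≠ z₀) (hwne : ∀ k, ws k ≠ w₀)
    (hzt : Tendsto zs atTop (nhds z₀)) (hwt : Tendsto ws atTop (nhds w₀)) :
    HasGermPair u z₀ w₀ := by
  have uan : AnalyticOnNhd ℂ u (ball (0:ℂ) 1) := hhol.analyticOnNhd isOpen_ball
  -- u z₀ = u w₀
  have hcz : ContinuousAt u z₀ := (uan z₀ hz₀).continuousAt
  have hcw : ContinuousAt u w₀ := (uan w₀ hw₀).continuousAt
  have hp : u z₀ = u w₀ := by
    have h1 : Tendsto (fun k => u (zs k)) atTop (nhds (u z₀)) := (hcz.tendsto).comp hzt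
    have h2 : Tendsto (fun k => u (ws k)) atTop (nhds (u w₀)) := (hcw.tendsto).comp hwt
    refine tendsto_nhds_unique (h1.congr fun k => ?_) h2
    exact hueq k
  -- nonconstant coordinate
  push_neg at hnc
  obtain ⟨z₁, hz₁, hz₁ne⟩ := hnc (u z₀)
  obtain ⟨j, hj⟩ := Function.ne_iff.1 hz₁ne
  set f : ℂ → ℂ := fun z => u z j - u z₀ j with hf_def
  have fan : AnalyticOnNhd ℂ f (ball (0:ℂ) 1) := by
    have h1 : AnalyticOnNhd ℂ (fun z => u z j) (ball (0:ℂ) 1) :=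
      (ContinuousLinearMap.proj (R := ℂ) (φ := fun _ : Fin n => ℂ) j).comp_analyticOnNhd uan
    exact h1.sub analyticOnNhd_const
  have hfz₁ : f z₁ ≠ 0 := sub_ne_zero.2 hj
  have hfnot : ¬ (∀ᶠ z in nhds z₀, f z = 0) ∧ ¬ (∀ᶠ z in nhds w₀, f z = 0) := by
    constructor <;>
    · intro h
      have := (fan.eqOn_zero_of_preconnected_of_eventuallyEq_zero
        (convex_ball (0:ℂ) 1).isPreconnected (by assumption) h) hz₁
      exact hfz₁ this
  have hfz₀ : f z₀ = 0 := by simp [hf_def]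
  have hfw₀ : f w₀ = 0 := by simp [hf_def, ← hp]
  -- orders
  obtain ⟨a, ha⟩ : ∃ a : ℕ, analyticOrderAt f z₀ = a := by
    have := analyticOrderAt_eq_top (f := f) (z₀ := z₀)
    rcases eq_or_ne (analyticOrderAt f z₀) ⊤ with h | h
    · exact absurd (this.1 h) hfnot.1
    · exact ⟨(analyticOrderAt f z₀).toNat, (ENat.coe_toNat h).symm⟩
  obtain ⟨b, hb⟩ : ∃ b : ℕ, analyticOrderAt f w₀ = b := by
    have := analyticOrderAt_eq_top (f := f) (z₀ := w₀)
    rcases eq_or_ne (analyticOrderAt f w₀) ⊤ with h | h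
    · exact absurd (this.1 h) hfnot.2
    · exact ⟨(analyticOrderAt f w₀).toNat, (ENat.coe_toNat h).symm⟩
  have ha0 : a ≠ 0 := by
    intro h
    rw [h] at ha
    obtain ⟨g, hg, hg0, hfg⟩ := ((fan z₀ hz₀).analyticOrderAt_eq_natCast (n := 0)).1 (by exact_mod_cast ha)
    have h2 := hfg.self_of_nhds
    rw [hfz₀] at h2
    simp only [pow_zero, one_smul] at h2
    exact hg0 h2.symm
  have hb0 : b ≠ 0 := by
    intro h
    rw [h] at hb
    obtain ⟨g, hg, hg0, hfg⟩ := ((fan w₀ hw₀).analyticOrderAt_eq_natCast (n := 0)).1 (by exact_mod_cast hb)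
    have h2 := hfg.self_of_nhds
    rw [hfw₀] at h2
    simp only [pow_zero, one_smul] at h2
    exact hg0 h2.symm
  -- normal forms and charts
  obtain ⟨φ, hφan, hφ0, ⟨φ', hφd, hφd'⟩, hφev⟩ := holo_normal_form ha0 (fan z₀ hz₀) ha
  obtain ⟨ψ, hψan, hψ0, ⟨ψ', hψd, hψd'⟩, hψev⟩ := holo_normal_form hb0 (fan w₀ hw₀) hb
  obtain ⟨sΦ, hsΦ, Φ, hΦ0, hΦdiff, hΦright, hΦmem, hΦleft⟩ :=
    holo_local_chart hφan hφ0 hφd hφd' (isOpen_ball.mem_nhds hz₀)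
  obtain ⟨sΨ, hsΨ, Ψ, hΨ0, hΨdiff, hΨright, hΨmem, hΨleft⟩ :=
    holo_local_chart hψan hψ0 hψd hψd' (isOpen_ball.mem_nhds hw₀)
  -- bundled eventual facts along the sequences
  set P : ℕ → Prop := fun k =>
    f (zs k) = (φ (zs k)) ^ a ∧ f (ws k) = (ψ (ws k)) ^ b ∧
    Φ (φ (zs k)) = zs k ∧ Ψ (ψ (ws k)) = ws k with hP_def
  have hPev : ∀ᶠ k in atTop, P k := by
    have e1 := hzt.eventually hφev
    have e2 := hwt.eventually hψev
    have e3 := hzt.eventually hΦleft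
    have e4 := hwt.eventually hΨleft
    filter_upwards [e1, e2, e3, e4] with k h1 h2 h3 h4
    exact ⟨h1, h2, h3, h4⟩
  -- the root-of-unity data
  set t : ℕ → ℂ := fun k => (ψ (ws k)) ^ ((a : ℂ)⁻¹) with ht_def
  have hta : ∀ k, (t k) ^ a = ψ (ws k) := fun k => Complex.cpow_nat_inv_pow _ ha0
  set μ : ℕ → ℂ := fun k => φ (zs k) / (t k) ^ b with hμ_def
  have hζω : ∀ k, P k → (φ (zs k)) ^ a = (ψ (ws k)) ^ b := by
    intro k hk
    rw [← hk.1, ← hk.2.1]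
    simp only [hf_def]
    rw [hueq k]
  have hωne : ∀ k, P k → ψ (ws k) ≠ 0 := by
    intro k hk h
    have := hk.2.2.2
    rw [h, hΨ0] at this
    exact hwne k this.symm
  have hζne : ∀ k, P k → φ (zs k) ≠ 0 := by
    intro k hk h
    have := hk.2.2.1
    rw [h, hΦ0] at this
    exact hzne k this.symm
  have htne : ∀ k, P k → t k ≠ 0 := by
    intro k hk h
    have := hta k
    rw [h, zero_pow ha0] at this
    exact hωne k hk this.symm
  have hμroot : ∀ k, P k → (μ k) ^ a = 1 := by
    intro k hk
    have htb : ((t k) ^ b) ^ a = (ψ (ws k)) ^ b := by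
      rw [← pow_right_comm, hta k]
    simp only [hμ_def, div_pow, htb, hζω k hk]
    exact div_self (pow_ne_zero _ (hωne k hk))
  -- pigeonhole on the finitely many a-th roots of unity
  have hRfin : {x : ℂ | x ^ a = 1}.Finite := by
    apply Set.Finite.subset (Polynomial.nthRoots a (1:ℂ)).toFinset.finite_toSet
    intro x hx
    simp only [Multiset.mem_toFinset, Finset.mem_coe]
    rw [Polynomial.mem_nthRoots (Nat.pos_of_ne_zero ha0)]
    exact hx
  obtain ⟨c, hcR, hcfreq⟩ : ∃ c, c ^ a = 1 ∧ ∃ᶠ k in atTop, μ k = c := by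
    by_contra h
    push_neg at h
    have hall : ∀ᶠ k in atTop, ∀ x ∈ {x : ℂ | x ^ a = 1}, μ k ≠ x := by
      rw [Set.Finite.eventually_all hRfin]
      intro x hx
      exact h x hx
    have hFalse : ∀ᶠ _k : ℕ in atTop, False := by
      filter_upwards [hall, hPev] with k h1 h2
      exact h1 (μ k) (hμroot k h2) rfl
    obtain ⟨_, hF⟩ := hFalse.exists
    exact hF
  have hcne : c ≠ 0 := by
    intro h
    rw [h, zero_pow ha0] at hcR
    exact one_ne_zero hcR.symm
  obtain ⟨σ, hσmono, hσ⟩ := Filter.extraction_of_frequently_atTop (hcfreq.and_eventually hPev)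
  -- the germs
  set α : ℂ → ℂ := fun s => Φ (c * s ^ b) with hα_def
  set β : ℂ → ℂ := fun s => Ψ (s ^ a) with hβ_def
  -- choose radius
  have hcont1 : ContinuousAt (fun s : ℂ => c * s ^ b) 0 := by fun_prop
  have hcont2 : ContinuousAt (fun s : ℂ => s ^ a) 0 := by fun_prop
  have hn1 : (fun s : ℂ => c * s ^ b) ⁻¹' (ball (0:ℂ) sΦ) ∈ nhds (0:ℂ) := by
    apply hcont1.preimage_mem_nhds
    simp only [mul_zero, zero_pow hb0]
    exact isOpen_ball.mem_nhds (by simp [hsΦ])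
  have hn2 : (fun s : ℂ => s ^ a) ⁻¹' (ball (0:ℂ) sΨ) ∈ nhds (0:ℂ) := by
    apply hcont2.preimage_mem_nhds
    simp only [zero_pow ha0]
    exact isOpen_ball.mem_nhds (by simp [hsΨ])
  obtain ⟨r, hr, hrball⟩ := Metric.mem_nhds_iff.1 (inter_mem hn1 hn2)
  have hrmem : ∀ s ∈ ball (0:ℂ) r, c * s ^ b ∈ ball (0:ℂ) sΦ ∧ s ^ a ∈ ball (0:ℂ) sΨ :=
    fun s hs => hrball hs
  -- α, β basic properties
  have hα0 : α 0 = z₀ := by simp [hα_def, zero_pow hb0, hΦ0]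
  have hβ0 : β 0 = w₀ := by simp [hβ_def, zero_pow ha0, hΨ0]
  have hαdiff : DifferentiableOn ℂ α (ball (0:ℂ) r) := by
    intro s hs
    have h1 : DifferentiableAt ℂ (fun s : ℂ => c * s ^ b) s := by fun_prop
    exact ((hΦdiff _ (hrmem s hs).1).comp s h1).differentiableWithinAt
  have hβdiff : DifferentiableOn ℂ β (ball (0:ℂ) r) := by
    intro s hs
    have h1 : DifferentiableAt ℂ (fun s : ℂ => s ^ a) s := by fun_prop
    exact ((hΨdiff _ (hrmem s hs).2).comp s h1).differentiableWithinAt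
  have hαmem : ∀ s ∈ ball (0:ℂ) r, α s ∈ ball (0:ℂ) 1 :=
    fun s hs => hΦmem _ (hrmem s hs).1
  have hβmem : ∀ s ∈ ball (0:ℂ) r, β s ∈ ball (0:ℂ) 1 :=
    fun s hs => hΨmem _ (hrmem s hs).2
  -- the coincidence along the sequence t (σ m)
  have hαt : ∀ m, α (t (σ m)) = zs (σ m) := by
    intro m
    obtain ⟨hμc, hPm⟩ := hσ m
    have : c * (t (σ m)) ^ b = φ (zs (σ m)) := by
      rw [← hμc]
      simp only [hμ_def]
      exact div_mul_cancel₀ _ (pow_ne_zero _ (htne (σ m) hPm))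
    rw [hα_def]
    simp only [this]
    exact hPm.2.2.1
  have hβt : ∀ m, β (t (σ m)) = ws (σ m) := by
    intro m
    obtain ⟨hμc, hPm⟩ := hσ m
    rw [hβ_def]
    simp only [hta (σ m)]
    exact hPm.2.2.2
  -- G := u∘α - u∘β is analytic on ball 0 r and vanishes along t (σ m) → 0
  set G : ℂ → (Fin n → ℂ) := fun s => u (α s) - u (β s) with hG_def
  have hGdiff : DifferentiableOn ℂ G (ball (0:ℂ) r) := by
    apply DifferentiableOn.sub
    · exact (hhol.comp hαdiff (fun s hs => hαmem s hs))
    · exact (hhol.comp hβdiff (fun s hs => hβmem s hs))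
  have hGan : AnalyticAt ℂ G 0 :=
    (hGdiff.analyticOnNhd isOpen_ball) 0 (by simp [hr])
  have hGzero : ∀ m, G (t (σ m)) = 0 := by
    intro m
    simp only [hG_def, hαt m, hβt m, hueq (σ m), sub_self]
  have htσne : ∀ m, t (σ m) ≠ 0 := fun m => htne (σ m) (hσ m).2
  have htσtend : Tendsto (fun m => t (σ m)) atTop (nhds 0) := by
    rw [Metric.tendsto_atTop]
    intro ε hε
    have hωtend : Tendsto (fun m => ψ (ws (σ m))) atTop (nhds 0) := by
      have h1 : Tendsto (fun k => ψ (ws k)) atTop (nhds (ψ w₀)) :=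
        (hψan.continuousAt.tendsto).comp hwt
      rw [hψ0] at h1
      exact h1.comp hσmono.tendsto_atTop
    rw [Metric.tendsto_atTop] at hωtend
    obtain ⟨N, hN⟩ := hωtend (ε ^ a) (pow_pos hε a)
    refine ⟨N, fun m hm => ?_⟩
    have h1 : ‖ψ (ws (σ m))‖ < ε ^ a := by
      have := hN m hm
      simpa [Complex.dist_eq] using this
    have h2 : ‖t (σ m)‖ ^ a < ε ^ a := by
      rw [← norm_pow, hta (σ m)]
      exact h1
    by_contra hcon
    push_neg at hcon
    have : ε ≤ ‖t (σ m)‖ := by simpa [Complex.dist_eq] using hcon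
    exact absurd h2 (not_lt.2 (pow_le_pow_left₀ (le_of_lt hε) this a))
  have hGev : ∀ᶠ s in nhds (0:ℂ), G s = 0 := by
    rw [← hGan.frequently_zero_iff_eventually_zero]
    have h1 : Tendsto (fun m => t (σ m)) atTop (𝓝[≠] (0:ℂ)) := by
      apply tendsto_nhdsWithin_of_tendsto_nhds_of_eventually_within _ htσtend
      exact Eventually.of_forall fun m => htσne m
    exact h1.frequently (Eventually.of_forall hGzero).frequently
  obtain ⟨r', hr', hr'ball⟩ := Metric.mem_nhds_iff.1 hGev
  -- final radius
  set ρ := min r r' with hρ_def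
  have hρ : 0 < ρ := lt_min hr hr'
  refine ⟨ρ, hρ, α, β, hαdiff.mono (ball_subset_ball (min_le_left _ _)),
    hβdiff.mono (ball_subset_ball (min_le_left _ _)), hα0, hβ0, ?_, ?_⟩
  · intro s hs
    have hs1 : s ∈ ball (0:ℂ) r := ball_subset_ball (min_le_left _ _) hs
    have hs2 : s ∈ ball (0:ℂ) r' := ball_subset_ball (min_le_right _ _) hs
    refine ⟨hαmem s hs1, hβmem s hs1, ?_⟩
    have := hr'ball hs2
    simpa [hG_def, sub_eq_zero] using this
  · refine ⟨(ρ / 2 : ℝ), ?_, ?_⟩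
    · simp only [mem_ball, Complex.dist_eq, sub_zero]
      rw [Complex.norm_real, Real.norm_eq_abs]
      rw [abs_of_pos (by linarith)]
      linarith
    · intro hcon
      have hmem : c * ((ρ/2 : ℝ) : ℂ) ^ b ∈ ball (0:ℂ) sΦ := by
        apply (hrmem _ _).1
        simp only [mem_ball, Complex.dist_eq, sub_zero]
        rw [Complex.norm_real, Real.norm_eq_abs, abs_of_pos (by linarith)]
        calc ρ / 2 < ρ := by linarith
        _ ≤ r := min_le_left _ _
      have hφα : φ (α ((ρ/2 : ℝ) : ℂ)) = c * ((ρ/2 : ℝ) : ℂ) ^ b := hΦright _ hmem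
      rw [hcon, hφ0] at hφα
      have : c * ((ρ/2 : ℝ) : ℂ) ^ b ≠ 0 := by
        apply mul_ne_zero hcne
        apply pow_ne_zero
        simpa using ne_of_gt (by linarith : (0:ℝ) < ρ/2)
      exact this hφα.symm

/-- The image of a ball under a nonconstant holomorphic germ is a neighbourhood. -/
private lemma image_mem_nhds {α : ℂ → ℂ} {r : ℝ} (hr : 0 < r)
    (hd : DifferentiableOn ℂ α (ball (0:ℂ) r)) {z : ℂ} (h0 : α 0 = z)
    (hw : ∃ t ∈ ball (0:ℂ) r, α t ≠ z) : α '' (ball (0:ℂ) r) ∈ nhds z := by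
  have han : AnalyticOnNhd ℂ α (ball (0:ℂ) r) := hd.analyticOnNhd isOpen_ball
  rcases han.is_constant_or_isOpen (convex_ball (0:ℂ) r).isPreconnected with h | h
  · obtain ⟨w, hwc⟩ := h
    obtain ⟨t, ht, htne⟩ := hw
    exfalso
    apply htne
    rw [hwc t ht, ← hwc 0 (by simp [hr]), h0]
  · have := h (ball (0:ℂ) r) subset_rfl isOpen_ball
    apply this.mem_nhds
    exact ⟨0, by simp [hr], h0⟩

/-- If `u` takes the same value on a sequence of points accumulating at an interior
point, then `u` is constant (contradiction). -/
private lemma const_of_accum {n : ℕ} {u : ℂ → Fin n → ℂ}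
    (hhol : DifferentiableOn ℂ u (ball (0:ℂ) 1))
    (hnc : ¬ ∃ C, ∀ z ∈ ball (0:ℂ) 1, u z = C)
    {z₀ : ℂ} (hz₀ : z₀ ∈ ball (0:ℂ) 1) {xs : ℕ → ℂ}
    (hxne : ∀ k, xs k ≠ z₀) (hxt : Tendsto xs atTop (nhds z₀))
    {C : Fin n → ℂ} (hval : ∀ k, u (xs k) = C) : False := by
  have uan : AnalyticOnNhd ℂ u (ball (0:ℂ) 1) := hhol.analyticOnNhd isOpen_ball
  have hCz : C = u z₀ := by
    have h1 : Tendsto (fun k => u (xs k)) atTop (nhds (u z₀)) :=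
      ((uan z₀ hz₀).continuousAt.tendsto).comp hxt
    have h2 : Tendsto (fun k => u (xs k)) atTop (nhds C) := by
      simp only [hval]; exact tendsto_const_nhds
    exact (tendsto_nhds_unique h2 h1)
  set G : ℂ → Fin n → ℂ := fun z => u z - u z₀ with hG_def
  have hGan : AnalyticOnNhd ℂ G (ball (0:ℂ) 1) := uan.sub analyticOnNhd_const
  have hfreq : ∃ᶠ x in 𝓝[≠] z₀, G x = 0 := by
    have h1 : Tendsto xs atTop (𝓝[≠] z₀) :=
      tendsto_nhdsWithin_of_tendsto_nhds_of_eventually_within _ hxt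
        (Eventually.of_forall hxne)
    apply h1.frequently
    apply (Eventually.of_forall (fun k => ?_)).frequently
    simp only [hG_def, hval k, hCz, sub_self]
  have hev : ∀ᶠ z in nhds z₀, G z = 0 :=
    ((hGan z₀ hz₀).frequently_zero_iff_eventually_zero).1 hfreq
  have : Set.EqOn G 0 (ball (0:ℂ) 1) :=
    hGan.eqOn_zero_of_preconnected_of_eventuallyEq_zero
      (convex_ball (0:ℂ) 1).isPreconnected hz₀ hev
  apply hnc
  refine ⟨u z₀, fun z hz => ?_⟩
  have := this hz
  simpa [hG_def, sub_eq_zero] using this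

/-- Closure upgrade: coincidence pairs accumulating at an interior off-diagonal pair
yield a germ pair. -/
private lemma germ_of_cluster {n : ℕ} {u : ℂ → Fin n → ℂ}
    (hhol : DifferentiableOn ℂ u (ball (0:ℂ) 1))
    (hnc : ¬ ∃ C, ∀ z ∈ ball (0:ℂ) 1, u z = C)
    {zs ws : ℕ → ℂ} {z₀ w₀ : ℂ} (hz₀ : z₀ ∈ ball (0:ℂ) 1) (hw₀ : w₀ ∈ ball (0:ℂ) 1)
    (hzb : ∀ k, zs k ∈ ball (0:ℂ) 1) (hwb : ∀ k, ws k ∈ ball (0:ℂ) 1)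
    (hueq : ∀ k, u (zs k) = u (ws k))
    (hzne : ∀ k, zs k ≠ z₀)
    (hzt : Tendsto zs atTop (nhds z₀)) (hwt : Tendsto ws atTop (nhds w₀)) :
    HasGermPair u z₀ w₀ := by
  have uan : AnalyticOnNhd ℂ u (ball (0:ℂ) 1) := hhol.analyticOnNhd isOpen_ball
  have hp : u z₀ = u w₀ := by
    have h1 : Tendsto (fun k => u (zs k)) atTop (nhds (u z₀)) :=
      ((uan z₀ hz₀).continuousAt.tendsto).comp hzt
    have h2 : Tendsto (fun k => u (ws k)) atTop (nhds (u w₀)) :=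
      ((uan w₀ hw₀).continuousAt.tendsto).comp hwt
    exact tendsto_nhds_unique (h1.congr fun k => hueq k) h2
  -- eventually ws k ≠ w₀
  have hwev : ∀ᶠ k in atTop, ws k ≠ w₀ := by
    by_contra h
    rw [Filter.not_eventually] at h
    obtain ⟨σ, hσmono, hσ⟩ := Filter.extraction_of_frequently_atTop h
    refine const_of_accum hhol hnc hz₀ (fun m => hzne (σ m))
      (hzt.comp hσmono.tendsto_atTop) (C := u z₀) (fun m => ?_)
    rw [hueq (σ m), not_not.1 (hσ m), ← hp]
  obtain ⟨σ, hσmono, hσ⟩ := Filter.extraction_of_frequently_atTop hwev.frequently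
  exact lemmaB hhol hnc hz₀ hw₀ (fun m => hzb (σ m)) (fun m => hwb (σ m))
    (fun m => hueq (σ m)) (fun m => hzne (σ m)) hσ
    (hzt.comp hσmono.tendsto_atTop) (hwt.comp hσmono.tendsto_atTop)

/-- Points along a germ pair again form germ pairs. -/
private lemma germ_shift {n : ℕ} {u : ℂ → Fin n → ℂ} {z w : ℂ} {r : ℝ} (hr : 0 < r)
    {α β : ℂ → ℂ}
    (hα : DifferentiableOn ℂ α (ball (0:ℂ) r)) (hβ : DifferentiableOn ℂ β (ball (0:ℂ) r))
    (hα0 : α 0 = z) (hβ0 : β 0 = w)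
    (hmem : ∀ t ∈ ball (0:ℂ) r, α t ∈ ball (0:ℂ) 1 ∧ β t ∈ ball (0:ℂ) 1 ∧ u (α t) = u (β t))
    (hwit : ∃ t ∈ ball (0:ℂ) r, α t ≠ z) {t₀ : ℂ} (ht₀ : t₀ ∈ ball (0:ℂ) r) :
    HasGermPair u (α t₀) (β t₀) := by
  set r' : ℝ := r - ‖t₀‖ with hr'_def
  have ht₀abs : ‖t₀‖ < r := by simpa [Complex.dist_eq] using ht₀
  have hr' : 0 < r' := by simp only [hr'_def]; linarith
  have hsub : ∀ s ∈ ball (0:ℂ) r', t₀ + s ∈ ball (0:ℂ) r := by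
    intro s hs
    have : ‖s‖ < r' := by simpa [Complex.dist_eq] using hs
    simp only [mem_ball, Complex.dist_eq, sub_zero]
    calc ‖t₀ + s‖ ≤ ‖t₀‖ + ‖s‖ := norm_add_le _ _
    _ < ‖t₀‖ + r' := by linarith
    _ = r := by simp [hr'_def]
  have htransdiff : ∀ (γ : ℂ → ℂ), DifferentiableOn ℂ γ (ball (0:ℂ) r) →
      DifferentiableOn ℂ (fun s => γ (t₀ + s)) (ball (0:ℂ) r') := by
    intro γ hγ
    exact hγ.comp ((differentiable_const t₀).add differentiable_id).differentiableOn hsub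
  refine ⟨r', hr', fun s => α (t₀ + s), fun s => β (t₀ + s),
    htransdiff α hα, htransdiff β hβ, by simp, by simp, ?_, ?_⟩
  · intro s hs
    exact hmem _ (hsub s hs)
  · by_contra hcon
    push_neg at hcon
    -- then α is locally constant near t₀, hence constant, contradicting hwit
    have han : AnalyticOnNhd ℂ α (ball (0:ℂ) r) := hα.analyticOnNhd isOpen_ball
    have hev : α =ᶠ[nhds t₀] (fun _ => α t₀) := by
      have hball : Metric.ball t₀ r' ∈ nhds t₀ := isOpen_ball.mem_nhds (mem_ball_self hr')
      filter_upwards [hball] with x hx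
      have : x - t₀ ∈ ball (0:ℂ) r' := by
        simpa [Complex.dist_eq, sub_zero] using hx
      have := hcon (x - t₀) this
      simpa using this
    have heq : Set.EqOn α (fun _ => α t₀) (ball (0:ℂ) r) :=
      han.eqOn_of_preconnected_of_eventuallyEq analyticOnNhd_const
        (convex_ball (0:ℂ) r).isPreconnected ht₀ hev
    obtain ⟨t₁, ht₁, ht₁ne⟩ := hwit
    apply ht₁ne
    rw [heq ht₁, ← heq (mem_ball_self hr), hα0]

private lemma u_lim {n : ℕ} {u : ℂ → Fin n → ℂ}
    (hcont : ContinuousOn u (closedBall (0:ℂ) 1)) {xs : ℕ → ℂ} {x : ℂ}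
    (hx : x ∈ closedBall (0:ℂ) 1) (hxs : ∀ k, xs k ∈ closedBall (0:ℂ) 1)
    (ht : Tendsto xs atTop (nhds x)) : Tendsto (fun k => u (xs k)) atTop (nhds (u x)) :=
  (hcont x hx).tendsto.comp
    (tendsto_nhdsWithin_of_tendsto_nhds_of_eventually_within _ ht (Eventually.of_forall hxs))

/-- A subset of the closed unit disc `𝔻 ⊆ ℂ` which is relatively open in `𝔻`. -/
def IsRelOpenInDisc (U : Set ℂ) : Prop :=
  U ⊆ closedBall (0 : ℂ) 1 ∧ ∃ O : Set ℂ, IsOpen O ∧ U = O ∩ closedBall (0 : ℂ) 1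

/-- A map `u` defined on the closed unit disc is *simple* if there do not exist two
disjoint nonempty relatively open subsets `U, V` of `𝔻` with `u(U) = u(V)`. -/
def IsSimpleDisc {n : ℕ} (u : ℂ → (Fin n → ℂ)) : Prop :=
  ¬ ∃ U V : Set ℂ, IsRelOpenInDisc U ∧ IsRelOpenInDisc V ∧
      U.Nonempty ∧ V.Nonempty ∧ Disjoint U V ∧ u '' U = u '' V

/-- Simplicity criterion for holomorphic discs: a holomorphic disc `u : 𝔻 → ℂⁿ` whose
boundary restriction is injective and whose interior avoids the image of the boundary
circle is simple. -/
theorem holomorphic_disc_simple_of_embedded_boundary {n : ℕ} (hn : 1 ≤ n)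
    (u : ℂ → (Fin n → ℂ))
    (hcont : ContinuousOn u (closedBall (0 : ℂ) 1))
    (hhol : DifferentiableOn ℂ u (ball (0 : ℂ) 1))
    (hinj : Set.InjOn u (sphere (0 : ℂ) 1))
    (hint : Disjoint (u '' ball (0 : ℂ) 1) (u '' sphere (0 : ℂ) 1)) :
    IsSimpleDisc u := by
  rintro ⟨U, V, ⟨hUsub, OU, hOU, hUeq⟩, ⟨hVsub, OV, hOV, hVeq⟩,
    ⟨z₀, hz₀U⟩, hVne, hUV, himg⟩
  -- `u` is not constant on the ball
  have hnc : ¬ ∃ C, ∀ z ∈ ball (0:ℂ) 1, u z = C := by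
    rintro ⟨C, hC⟩
    have hcb : ∀ z ∈ closedBall (0:ℂ) 1, u z = C := by
      intro z hz
      set xs : ℕ → ℂ := fun m => ((1 - 1/(m+1) : ℝ) : ℂ) * z with hxs_def
      have hfrac : ∀ m : ℕ, 0 ≤ 1 - 1/(m+1 : ℝ) ∧ 1 - 1/(m+1 : ℝ) < 1 := by
        intro m
        have h1 : (0:ℝ) < 1/(m+1 : ℝ) := by positivity
        have h2 : 1/(m+1 : ℝ) ≤ 1 := by
          rw [div_le_one (by positivity)]
          simp
        constructor <;> linarith
      have hxsb : ∀ m, xs m ∈ ball (0:ℂ) 1 := by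
        intro m
        simp only [hxs_def, mem_ball, Complex.dist_eq, sub_zero, norm_mul]
        have hznorm : ‖z‖ ≤ 1 := by simpa [Complex.dist_eq] using hz
        have := hfrac m
        calc ‖((1 - 1/(m+1) : ℝ) : ℂ)‖ * ‖z‖
            ≤ ‖((1 - 1/(m+1) : ℝ) : ℂ)‖ * 1 := by
              apply mul_le_mul_of_nonneg_left hznorm (by positivity)
        _ = |1 - 1/(m+1 : ℝ)| := by rw [mul_one, Complex.norm_real, Real.norm_eq_abs]
        _ < 1 := by rw [abs_of_nonneg this.1]; exact this.2
      have hxt : Tendsto xs atTop (nhds z) := by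
        have h1 : Tendsto (fun m : ℕ => (1 - 1/(m+1) : ℝ)) atTop (nhds 1) := by
          have h0 := tendsto_one_div_add_atTop_nhds_zero_nat (𝕜 := ℝ)
          have h2 := (tendsto_const_nhds : Tendsto (fun _ : ℕ => (1:ℝ)) atTop (nhds 1)).sub h0
          simpa using h2
        have h2 : Tendsto (fun m : ℕ => ((1 - 1/(m+1) : ℝ) : ℂ)) atTop (nhds 1) := by
          have h3 := (Complex.continuous_ofReal.tendsto 1).comp h1
          exact h3
        have h4 := h2.mul (tendsto_const_nhds : Tendsto (fun _ : ℕ => z) atTop (nhds z))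
        rw [hxs_def]
        simpa using h4
      have h1 : Tendsto (fun m => u (xs m)) atTop (nhds (u z)) :=
        u_lim hcont hz (fun m => ball_subset_closedBall (hxsb m)) hxt
      have h2 : Tendsto (fun m => u (xs m)) atTop (nhds C) := by
        simp only [fun m => hC (xs m) (hxsb m)]
        exact tendsto_const_nhds
      exact tendsto_nhds_unique h1 h2
    have h1s : (1:ℂ) ∈ sphere (0:ℂ) 1 := by simp
    have h2s : (-1:ℂ) ∈ sphere (0:ℂ) 1 := by simp
    have : (1:ℂ) = -1 := by
      apply hinj h1s h2s
      rw [hcb 1 (sphere_subset_closedBall h1s), hcb (-1) (sphere_subset_closedBall h2s)]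
    norm_num at this
  -- U and V lie in the open ball
  have hUball : U ⊆ ball (0:ℂ) 1 := by
    intro z hz
    have hzc := hUsub hz
    rw [← ball_union_sphere] at hzc
    rcases hzc with h | h
    · exact h
    exfalso
    have : u z ∈ u '' V := by rw [← himg]; exact ⟨z, hz, rfl⟩
    obtain ⟨w, hwV, hwu⟩ := this
    have hwc := hVsub hwV
    rw [← ball_union_sphere] at hwc
    rcases hwc with h2 | h2
    · exact Set.disjoint_left.1 hint ⟨w, h2, hwu⟩ ⟨z, h, rfl⟩
    · have : w = z := hinj h2 h hwu
      exact Set.disjoint_left.1 hUV hz (this ▸ hwV)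
  have hVball : V ⊆ ball (0:ℂ) 1 := by
    intro w hw
    have hwc := hVsub hw
    rw [← ball_union_sphere] at hwc
    rcases hwc with h | h
    · exact h
    exfalso
    have : u w ∈ u '' U := by rw [himg]; exact ⟨w, hw, rfl⟩
    obtain ⟨z, hzU, hzu⟩ := this
    have hzc := hUsub hzU
    rw [← ball_union_sphere] at hzc
    rcases hzc with h2 | h2
    · exact Set.disjoint_left.1 hint ⟨z, h2, hzu⟩ ⟨w, h, rfl⟩
    · have : z = w := hinj h2 h hzu
      exact Set.disjoint_left.1 hUV (this ▸ hzU) hw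
  classical
  set Theta : Set (ℂ × ℂ) := {p | p.1 ≠ p.2 ∧ HasGermPair u p.1 p.2} with hTheta_def
  have hTheta_val : ∀ p ∈ Theta, u p.1 = u p.2 ∧ p.1 ∈ ball (0:ℂ) 1 ∧ p.2 ∈ ball (0:ℂ) 1 := by
    rintro ⟨z, w⟩ ⟨hne, r, hr, α, β, hαd, hβd, hα0, hβ0, hm, hwit⟩
    have h0 := hm 0 (mem_ball_self hr)
    rw [hα0, hβ0] at h0
    exact ⟨h0.2.2, h0.1, h0.2.1⟩
  -- Theta is nonempty
  have hz₀ball : z₀ ∈ ball (0:ℂ) 1 := hUball hz₀U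
  have hΘne : ∃ w₀, (z₀, w₀) ∈ Theta := by
    -- a small ball around z₀ inside U
    obtain ⟨ρ₁, hρ₁, hρ₁sub⟩ := Metric.isOpen_iff.1 hOU z₀ (by rw [hUeq] at hz₀U; exact hz₀U.1)
    obtain ⟨ρ₂, hρ₂, hρ₂sub⟩ := Metric.isOpen_iff.1 isOpen_ball z₀ hz₀ball
    set ρ := min ρ₁ ρ₂ with hρ_def
    have hρ : 0 < ρ := lt_min hρ₁ hρ₂
    have hρU : Metric.ball z₀ ρ ⊆ U := by
      intro x hx
      rw [hUeq]
      exact ⟨hρ₁sub (Metric.ball_subset_ball (min_le_left _ _) hx),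
        ball_subset_closedBall (hρ₂sub (Metric.ball_subset_ball (min_le_right _ _) hx))⟩
    set zs : ℕ → ℂ := fun k => z₀ + ((ρ/2 / (k+1) : ℝ) : ℂ) with hzs_def
    have hzsU : ∀ k, zs k ∈ U := by
      intro k
      apply hρU
      simp only [hzs_def, mem_ball, Complex.dist_eq, add_sub_cancel_left, Complex.norm_real, Real.norm_eq_abs]
      have h1 : (0:ℝ) < ρ/2 / (k+1) := by positivity
      have h2 : ρ/2 / (k+1 : ℝ) ≤ ρ/2 := by
        apply div_le_self (by linarith)
        simp [le_add_iff_nonneg_left]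
      rw [abs_of_pos h1]
      linarith
    have hzsne : ∀ k, zs k ≠ z₀ := by
      intro k h
      have : ((ρ/2 / (k+1) : ℝ) : ℂ) = 0 := by
        have := congrArg (· - z₀) h
        simpa [hzs_def] using this
      rw [Complex.ofReal_eq_zero] at this
      have h1 : (0:ℝ) < ρ/2 / (k+1) := by positivity
      linarith [this ▸ h1]
    have hzst : Tendsto zs atTop (nhds z₀) := by
      have h1 : Tendsto (fun k : ℕ => (ρ/2 / (k+1) : ℝ)) atTop (nhds 0) := by
        have h0 := tendsto_one_div_add_atTop_nhds_zero_nat (𝕜 := ℝ)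
        have h2 := h0.const_mul (ρ/2)
        simpa [div_eq_mul_inv, mul_comm] using h2
      have h2 : Tendsto (fun k : ℕ => ((ρ/2 / (k+1) : ℝ) : ℂ)) atTop (nhds 0) := by
        have h3 := (Complex.continuous_ofReal.tendsto 0).comp h1
        exact h3
      have h4 := (tendsto_const_nhds : Tendsto (fun _ : ℕ => z₀) atTop (nhds z₀)).add h2
      rw [hzs_def]
      simpa using h4
    -- partners in V
    have hpart : ∀ k, ∃ w, w ∈ V ∧ u w = u (zs k) := by
      intro k
      have : u (zs k) ∈ u '' V := by rw [← himg]; exact ⟨zs k, hzsU k, rfl⟩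
      obtain ⟨w, hw, hwu⟩ := this
      exact ⟨w, hw, hwu⟩
    choose ws hwsV hwsu using hpart
    have hwscb : ∀ k, ws k ∈ closedBall (0:ℂ) 1 := fun k => hVsub (hwsV k)
    obtain ⟨w₀, hw₀cb, σ, hσmono, hσt⟩ := (isCompact_closedBall (0:ℂ) 1).tendsto_subseq hwscb
    have hzsσt : Tendsto (zs ∘ σ) atTop (nhds z₀) := hzst.comp hσmono.tendsto_atTop
    have huw₀ : u w₀ = u z₀ := by
      have h1 : Tendsto (fun m => u (ws (σ m))) atTop (nhds (u w₀)) :=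
        u_lim hcont hw₀cb (fun m => hwscb (σ m)) hσt
      have h2 : Tendsto (fun m => u (zs (σ m))) atTop (nhds (u z₀)) :=
        u_lim hcont (ball_subset_closedBall hz₀ball)
          (fun m => hUsub (hzsU (σ m))) hzsσt
      exact tendsto_nhds_unique (h1.congr (fun m => by rw [hwsu (σ m)])) h2
    have hw₀ball : w₀ ∈ ball (0:ℂ) 1 := by
      rw [← ball_union_sphere] at hw₀cb
      rcases hw₀cb with h | h
      · exact h
      exfalso
      exact Set.disjoint_left.1 hint ⟨z₀, hz₀ball, rfl⟩ ⟨w₀, h, huw₀⟩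
    have hz₀w₀ : z₀ ≠ w₀ := by
      intro h
      have hev : ∀ᶠ m in atTop, ws (σ m) ∈ Metric.ball z₀ ρ := by
        rw [← h] at hσt
        exact hσt (isOpen_ball.mem_nhds (mem_ball_self hρ))
      obtain ⟨m, hm⟩ := hev.exists
      exact Set.disjoint_left.1 hUV (hρU hm) (hwsV (σ m))
    refine ⟨w₀, hz₀w₀, ?_⟩
    exact germ_of_cluster hhol hnc hz₀ball hw₀ball
      (fun m => hUball (hzsU (σ m))) (fun m => hVball (hwsV (σ m)))
      (fun m => (hwsu (σ m)).symm) (fun m => hzsne (σ m)) hzsσt hσt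
  obtain ⟨w₀, hΘ₀⟩ := hΘne
  -- compactness and maximum of the distance functional
  set K : Set (ℂ × ℂ) := closure Theta with hK_def
  have hTsub : Theta ⊆ (closedBall (0:ℂ) 1) ×ˢ (closedBall (0:ℂ) 1) := by
    intro p hp
    exact ⟨ball_subset_closedBall (hTheta_val p hp).2.1,
      ball_subset_closedBall (hTheta_val p hp).2.2⟩
  have hKsub : K ⊆ (closedBall (0:ℂ) 1) ×ˢ (closedBall (0:ℂ) 1) :=
    closure_minimal hTsub ((isClosed_closedBall).prod (isClosed_closedBall))
  have hKcomp : IsCompact K :=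
    ((isCompact_closedBall (0:ℂ) 1).prod (isCompact_closedBall (0:ℂ) 1)).of_isClosed_subset
      isClosed_closure hKsub
  have hKne : K.Nonempty := ⟨(z₀, w₀), subset_closure hΘ₀⟩
  obtain ⟨q, hqK, hqmax⟩ := hKcomp.exists_isMaxOn hKne
    ((continuous_fst.dist continuous_snd).continuousOn)
  have hqd : 0 < dist q.1 q.2 := by
    have h1 := hqmax (subset_closure hΘ₀)
    have h2 : 0 < dist z₀ w₀ := dist_pos.2 hΘ₀.1
    simp only [Function.comp] at h1
    exact lt_of_lt_of_le h2 h1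
  have hqne : q.1 ≠ q.2 := dist_pos.1 hqd
  -- q is a limit of Theta points
  obtain ⟨ps, hpsT, hpst⟩ := mem_closure_iff_seq_limit.1 hqK
  have hps1 : Tendsto (fun m => (ps m).1) atTop (nhds q.1) :=
    ((continuous_fst.tendsto q).comp hpst)
  have hps2 : Tendsto (fun m => (ps m).2) atTop (nhds q.2) :=
    ((continuous_snd.tendsto q).comp hpst)
  have hq1cb : q.1 ∈ closedBall (0:ℂ) 1 := (hKsub hqK).1
  have hq2cb : q.2 ∈ closedBall (0:ℂ) 1 := (hKsub hqK).2
  have hqval : u q.1 = u q.2 := by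
    have h1 : Tendsto (fun m => u ((ps m).1)) atTop (nhds (u q.1)) :=
      u_lim hcont hq1cb (fun m => ball_subset_closedBall (hTheta_val _ (hpsT m)).2.1) hps1
    have h2 : Tendsto (fun m => u ((ps m).2)) atTop (nhds (u q.2)) :=
      u_lim hcont hq2cb (fun m => ball_subset_closedBall (hTheta_val _ (hpsT m)).2.2) hps2
    exact tendsto_nhds_unique (h1.congr (fun m => (hTheta_val _ (hpsT m)).1)) h2
  -- boundary exclusion: q lies in the open ball
  have hq1ball : q.1 ∈ ball (0:ℂ) 1 := by
    rw [← ball_union_sphere] at hq1cb hq2cb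
    rcases hq1cb with h1 | h1
    · exact h1
    exfalso
    rcases hq2cb with h2 | h2
    · exact Set.disjoint_left.1 hint ⟨q.2, h2, hqval.symm⟩ ⟨q.1, h1, rfl⟩
    · exact hqne (hinj h1 h2 hqval)
  have hq2ball : q.2 ∈ ball (0:ℂ) 1 := by
    rw [← ball_union_sphere] at hq2cb
    rcases hq2cb with h2 | h2
    · exact h2
    exfalso
    exact Set.disjoint_left.1 hint ⟨q.1, hq1ball, hqval⟩ ⟨q.2, h2, rfl⟩
  -- closure upgrade: q itself is a germ pair
  have hqT : HasGermPair u q.1 q.2 := by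
    by_cases hfr : ∃ᶠ m in atTop, (ps m).1 ≠ q.1 ∧ (ps m).2 ≠ q.2
    · obtain ⟨σ, hσmono, hσ⟩ := Filter.extraction_of_frequently_atTop hfr
      exact germ_of_cluster hhol hnc hq1ball hq2ball
        (fun m => (hTheta_val _ (hpsT (σ m))).2.1)
        (fun m => (hTheta_val _ (hpsT (σ m))).2.2)
        (fun m => (hTheta_val _ (hpsT (σ m))).1)
        (fun m => (hσ m).1)
        (hps1.comp hσmono.tendsto_atTop) (hps2.comp hσmono.tendsto_atTop)
    by_cases hfr2 : ∃ᶠ m in atTop, (ps m).1 = q.1 ∧ (ps m).2 ≠ q.2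
    · exfalso
      obtain ⟨σ, hσmono, hσ⟩ := Filter.extraction_of_frequently_atTop hfr2
      refine const_of_accum hhol hnc hq2ball (xs := fun m => (ps (σ m)).2)
        (fun m => (hσ m).2) (hps2.comp hσmono.tendsto_atTop) (C := u q.2) (fun m => ?_)
      rw [← (hTheta_val _ (hpsT (σ m))).1, (hσ m).1, hqval]
    by_cases hfr3 : ∃ᶠ m in atTop, (ps m).2 = q.2 ∧ (ps m).1 ≠ q.1
    · exfalso
      obtain ⟨σ, hσmono, hσ⟩ := Filter.extraction_of_frequently_atTop hfr3
      refine const_of_accum hhol hnc hq1ball (xs := fun m => (ps (σ m)).1)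
        (fun m => (hσ m).2) (hps1.comp hσmono.tendsto_atTop) (C := u q.1) (fun m => ?_)
      rw [(hTheta_val _ (hpsT (σ m))).1, (hσ m).1, hqval]
    · -- then eventually ps m = q, so q ∈ Theta
      rw [Filter.not_frequently] at hfr hfr2 hfr3
      have hev : ∀ᶠ m in atTop, ps m = q := by
        filter_upwards [hfr, hfr2, hfr3] with m h1 h2 h3
        push_neg at h1 h2 h3
        by_cases hc : (ps m).1 = q.1
        · have := h2 hc
          exact Prod.ext hc this
        · have h4 := h1 hc
          exact absurd (h3 h4) hc
      obtain ⟨m, hm⟩ := hev.exists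
      have := (hpsT m).2
      rwa [hm] at this
  -- maximum modulus: the difference along the germ is constant
  obtain ⟨r, hr, α, β, hαd, hβd, hα0, hβ0, hm, hwit⟩ := hqT
  have hαc : ContinuousAt α 0 :=
    (hαd.differentiableAt (isOpen_ball.mem_nhds (mem_ball_self hr))).continuousAt
  have hβc : ContinuousAt β 0 :=
    (hβd.differentiableAt (isOpen_ball.mem_nhds (mem_ball_self hr))).continuousAt
  have hne_ev : ∀ᶠ t in nhds (0:ℂ), α t ≠ β t := by
    have h1 : ContinuousAt (fun t => α t - β t) 0 := hαc.sub hβc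
    have h2 : (fun t => α t - β t) 0 ≠ 0 := by
      simp only [hα0, hβ0]
      exact sub_ne_zero.2 hqne
    have h3 := h1.eventually_ne h2
    filter_upwards [h3] with t ht
    exact sub_ne_zero.1 ht
  obtain ⟨r₂, hr₂, hr₂sub⟩ := Metric.mem_nhds_iff.1
    (inter_mem hne_ev (isOpen_ball.mem_nhds (mem_ball_self hr)))
  have hr₂ball : ball (0:ℂ) r₂ ⊆ ball (0:ℂ) r := fun t ht => (hr₂sub ht).2
  have hTpair : ∀ t ∈ ball (0:ℂ) r₂, (α t, β t) ∈ Theta := by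
    intro t ht
    exact ⟨(hr₂sub ht).1, germ_shift hr hαd hβd hα0 hβ0 hm hwit (hr₂ball ht)⟩
  have hmax2 : IsMaxOn (norm ∘ (fun t => α t - β t)) (ball (0:ℂ) r₂) 0 := by
    intro t ht
    have h1 := hqmax (subset_closure (hTpair t ht))
    simp only [Function.comp, hα0, hβ0]
    simp only [Function.comp] at h1
    calc ‖α t - β t‖ = dist (α t) (β t) := (dist_eq_norm _ _).symm
    _ ≤ dist q.1 q.2 := h1
    _ = ‖q.1 - q.2‖ := dist_eq_norm _ _
  have hdiff2 : DifferentiableOn ℂ (fun t => α t - β t) (ball (0:ℂ) r₂) :=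
    (hαd.mono hr₂ball).sub (hβd.mono hr₂ball)
  have heqc := Complex.eqOn_of_isPreconnected_of_isMaxOn_norm
    (convex_ball (0:ℂ) r₂).isPreconnected isOpen_ball hdiff2 (mem_ball_self hr₂) hmax2
  set c0 : ℂ := q.1 - q.2 with hc0_def
  have hc0ne : c0 ≠ 0 := sub_ne_zero.2 hqne
  have hβα : ∀ t ∈ ball (0:ℂ) r₂, β t = α t - c0 := by
    intro t ht
    have := heqc ht
    simp only [Function.const, hα0, hβ0] at this
    rw [← hc0_def] at this
    rw [← this]
    ring
  -- the image of α covers a neighbourhood of q.1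
  have hwit₂ : ∃ t ∈ ball (0:ℂ) r₂, α t ≠ q.1 := by
    by_contra hcon
    push_neg at hcon
    have han : AnalyticOnNhd ℂ α (ball (0:ℂ) r) := hαd.analyticOnNhd isOpen_ball
    have hev2 : α =ᶠ[nhds 0] (fun _ => q.1) := by
      filter_upwards [isOpen_ball.mem_nhds (mem_ball_self hr₂)] with x hx
      exact hcon x hx
    have heq2 : Set.EqOn α (fun _ => q.1) (ball (0:ℂ) r) :=
      han.eqOn_of_preconnected_of_eventuallyEq analyticOnNhd_const
        (convex_ball (0:ℂ) r).isPreconnected (mem_ball_self hr) hev2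
    obtain ⟨t₁, ht₁, ht₁ne⟩ := hwit
    exact ht₁ne (by rw [heq2 ht₁, ← hα0, heq2 (mem_ball_self hr)])
  have hN : α '' (ball (0:ℂ) r₂) ∈ nhds q.1 :=
    image_mem_nhds hr₂ (hαd.mono hr₂ball) hα0 hwit₂
  -- now u x = u (x - c0) near q.1, hence on the lens Ω
  set Ω : Set ℂ := ball (0:ℂ) 1 ∩ ball c0 1 with hΩ_def
  have hNsub : α '' (ball (0:ℂ) r₂) ⊆ Ω := by
    rintro x ⟨t, ht, rfl⟩
    refine ⟨(hm t (hr₂ball ht)).1, ?_⟩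
    have h1 : α t - c0 = β t := (hβα t ht).symm
    have h2 : β t ∈ ball (0:ℂ) 1 := (hm t (hr₂ball ht)).2.1
    simp only [mem_ball] at h2 ⊢
    rw [dist_eq_norm] at h2 ⊢
    rw [sub_zero] at h2
    rw [h1]
    exact h2
  set g : ℂ → Fin n → ℂ := fun x => u x - u (x - c0) with hg_def
  have hΩopen : IsOpen Ω := isOpen_ball.inter isOpen_ball
  have hgd : DifferentiableOn ℂ g Ω := by
    apply DifferentiableOn.sub
    · exact hhol.mono (fun x hx => hx.1)
    · apply hhol.comp ((differentiable_id.sub_const c0).differentiableOn)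
      intro x hx
      have := hx.2
      simp only [mem_ball] at this ⊢
      rw [dist_eq_norm] at this ⊢
      rw [sub_zero]
      exact this
  have hgan : AnalyticOnNhd ℂ g Ω := hgd.analyticOnNhd hΩopen
  have hq1Ω : q.1 ∈ Ω := hNsub ⟨0, mem_ball_self hr₂, hα0⟩
  have hgev : ∀ᶠ x in nhds q.1, g x = 0 := by
    filter_upwards [hN] with x hx
    obtain ⟨t, ht, rfl⟩ := hx
    simp only [hg_def]
    rw [← hβα t ht, (hm t (hr₂ball ht)).2.2, sub_self]
  have hgzero : Set.EqOn g 0 Ω :=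
    hgan.eqOn_zero_of_preconnected_of_eventuallyEq_zero
      ((convex_ball (0:ℂ) 1).inter (convex_ball c0 1)).isPreconnected hq1Ω hgev
  -- push to the boundary point ζ = c0 / ‖c0‖
  have hc0lt : ‖c0‖ < 2 := by
    have h1 : ‖q.1‖ < 1 := by simpa [Complex.dist_eq] using hq1ball
    have h2 : ‖q.2‖ < 1 := by simpa [Complex.dist_eq] using hq2ball
    calc ‖c0‖ ≤ ‖q.1‖ + ‖q.2‖ := norm_sub_le _ _
    _ < 2 := by linarith
  have hc0pos : 0 < ‖c0‖ := norm_pos_iff.2 hc0ne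
  set ζ : ℂ := c0 / (‖c0‖ : ℂ) with hζ_def
  have hζnorm : ‖ζ‖ = 1 := by
    simp only [hζ_def, norm_div]
    rw [Complex.norm_real, Real.norm_eq_abs, abs_of_pos hc0pos]
    exact div_self (ne_of_gt hc0pos)
  have hζs : ζ ∈ sphere (0:ℂ) 1 := by
    simp only [mem_sphere, Complex.dist_eq, sub_zero]
    exact hζnorm
  have hζc : ‖ζ - c0‖ < 1 := by
    have h1 : ζ - c0 = c0 * ((((‖c0‖)⁻¹ : ℝ) : ℂ) - 1) := by
      rw [hζ_def]
      push_cast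
      rw [div_eq_mul_inv]
      ring
    rw [h1, norm_mul]
    have h2 : ‖((((‖c0‖)⁻¹ : ℝ)) : ℂ) - 1‖ = |(‖c0‖)⁻¹ - 1| := by
      rw [← Complex.ofReal_one, ← Complex.ofReal_sub, Complex.norm_real, Real.norm_eq_abs]
    rw [h2]
    have h3 : ‖c0‖ * |(‖c0‖)⁻¹ - 1| = |1 - ‖c0‖| := by
      rw [← abs_of_pos hc0pos, ← abs_mul]
      congr 1
      have : ‖c0‖ ≠ 0 := ne_of_gt hc0pos
      field_simp
      rw [abs_of_pos hc0pos]
    rw [h3, abs_lt]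
    constructor <;> linarith
  have hζcball : ζ - c0 ∈ ball (0:ℂ) 1 := by
    simp only [mem_ball, Complex.dist_eq, sub_zero]
    exact hζc
  -- radial approach to ζ
  set xs : ℕ → ℂ := fun m => ((1 - 1/(m+1) : ℝ) : ℂ) * ζ with hxs_def
  have hfrac : ∀ m : ℕ, 0 ≤ 1 - 1/(m+1 : ℝ) ∧ 1 - 1/(m+1 : ℝ) < 1 := by
    intro m
    have h1 : (0:ℝ) < 1/(m+1 : ℝ) := by positivity
    have h2 : 1/(m+1 : ℝ) ≤ 1 := by
      rw [div_le_one (by positivity)]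
      simp
    constructor <;> linarith
  have hxsb : ∀ m, xs m ∈ ball (0:ℂ) 1 := by
    intro m
    simp only [hxs_def, mem_ball, Complex.dist_eq, sub_zero, norm_mul]
    rw [hζnorm, mul_one,
      Complex.norm_real, Real.norm_eq_abs, abs_of_nonneg (hfrac m).1]
    exact (hfrac m).2
  have hxst : Tendsto xs atTop (nhds ζ) := by
    have h1 : Tendsto (fun m : ℕ => (1 - 1/(m+1) : ℝ)) atTop (nhds 1) := by
      have h0 := tendsto_one_div_add_atTop_nhds_zero_nat (𝕜 := ℝ)
      have h2 := (tendsto_const_nhds : Tendsto (fun _ : ℕ => (1:ℝ)) atTop (nhds 1)).sub h0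
      simpa using h2
    have h2 : Tendsto (fun m : ℕ => ((1 - 1/(m+1) : ℝ) : ℂ)) atTop (nhds 1) := by
      have h3 := (Complex.continuous_ofReal.tendsto 1).comp h1
      exact h3
    have h4 := h2.mul (tendsto_const_nhds : Tendsto (fun _ : ℕ => ζ) atTop (nhds ζ))
    rw [hxs_def]
    simpa using h4
  have hxsΩ : ∀ᶠ m in atTop, xs m ∈ Ω := by
    have h1 : Tendsto (fun m => xs m - c0) atTop (nhds (ζ - c0)) :=
      hxst.sub tendsto_const_nhds
    have h2 : ∀ᶠ m in atTop, xs m - c0 ∈ ball (0:ℂ) 1 :=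
      h1 (isOpen_ball.mem_nhds hζcball)
    filter_upwards [h2] with m hm2
    refine ⟨hxsb m, ?_⟩
    simp only [mem_ball] at hm2 ⊢
    rw [dist_eq_norm] at hm2 ⊢
    rw [sub_zero] at hm2
    exact hm2
  -- take limits
  have hlim1 : Tendsto (fun m => u (xs m)) atTop (nhds (u ζ)) :=
    u_lim hcont (sphere_subset_closedBall hζs)
      (fun m => ball_subset_closedBall (hxsb m)) hxst
  have hlim2 : Tendsto (fun m => u (xs m - c0)) atTop (nhds (u (ζ - c0))) := by
    have hca : ContinuousAt u (ζ - c0) :=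
      ((hhol.analyticOnNhd isOpen_ball) _ hζcball).continuousAt
    exact hca.tendsto.comp (hxst.sub tendsto_const_nhds)
  have hfinal : u ζ = u (ζ - c0) := by
    apply tendsto_nhds_unique (hlim1.congr' ?_) hlim2
    filter_upwards [hxsΩ] with m hmΩ
    have := hgzero hmΩ
    simp only [hg_def, Pi.zero_apply, sub_eq_zero] at this
    exact this
  exact Set.disjoint_left.1 hint ⟨ζ - c0, hζcball, hfinal.symm⟩ ⟨ζ, hζs, rfl⟩
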